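/- Let n = n_1·1 + n_2·2 + ⋯ + n_r·r with n_i ≥ 0, and fix a partition of {1,…,n} into n_1 blocks of size 1, n_2 blocks of size 2, …, n_r blocks of size r. Let N ≤ Σ_n be the subgroup of permutations stabilizing each block setwise, so N ≅ (Σ_1)^{n_1} × (Σ_2)^{n_2} × ⋯ × (Σ_r)^{n_r}, and let H ≤ Σ_n be the subgroup, isomorphic to Σ_{n_1} × ⋯ × Σ_{n_r}, of permutations that permute the blocks of each given size among themselves via fixed order-preserving identifications of blocks of equal size. Then the normalizer of N in Σ_n is generated by N and H, N ∩ H is trivial, and this normalizer is the internal semidirect product N ⋊ H. -/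

import Mathlib

open Equiv

variable {r : ℕ} {ns : Fin r → ℕ}

/-- The ground set: a point is a triple `(s, j, p)` where `s` records the block size `s+1`,
`j` indexes the blocks of that size, and `p` is a position inside the block. -/
abbrev GroundSet (ns : Fin r → ℕ) : Type := Σ s : Fin r, Fin (ns s) × Fin (s.1 + 1)

/-- The homomorphism embedding the product of the symmetric groups of the blocks,
acting inside each block. -/
def blockDiag (ns : Fin r → ℕ) :
    (∀ s : Fin r, Fin (ns s) → Equiv.Perm (Fin (s.1 + 1))) →* Equiv.Perm (GroundSet ns) where
  toFun f := Equiv.sigmaCongrRight fun s => Equiv.prodShear (Equiv.refl _) (f s)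
  map_one' := by
    ext ⟨s, j, p⟩ <;> rfl
  map_mul' f g := by
    ext ⟨s, j, p⟩ <;> rfl

/-- The homomorphism embedding `Σ_{n_1} × ⋯ × Σ_{n_r}`, permuting the blocks of each given
size among themselves via the order-preserving identifications of blocks of equal size. -/
def blockPerm (ns : Fin r → ℕ) :
    (∀ s : Fin r, Equiv.Perm (Fin (ns s))) →* Equiv.Perm (GroundSet ns) where
  toFun τ := Equiv.sigmaCongrRight fun s => Equiv.prodCongr (τ s) (Equiv.refl _)
  map_one' := by
    ext ⟨s, j, p⟩ <;> rfl
  map_mul' τ τ' := by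
    ext ⟨s, j, p⟩ <;> rfl

theorem ground_ext {x y : GroundSet ns} (h1 : x.1 = y.1) (h2 : x.2.1.val = y.2.1.val)
    (h3 : x.2.2.val = y.2.2.val) : x = y := by
  obtain ⟨s, j, p⟩ := x; obtain ⟨s', j', p'⟩ := y
  dsimp at h1 h2 h3
  cases h1
  exact congrArg (Sigma.mk s) (Prod.ext (Fin.ext h2) (Fin.ext h3))

/-- "Same block" relation. -/
def SB (x y : GroundSet ns) : Prop := x.1 = y.1 ∧ x.2.1.val = y.2.1.val

theorem exists_blockDiag_of_SB {x y : GroundSet ns} (h : SB x y) :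
    ∃ f, blockDiag ns f x = y := by
  obtain ⟨s, j, p⟩ := x; obtain ⟨s', j', p'⟩ := y
  obtain ⟨h1, h2⟩ := h
  dsimp at h1 h2
  cases h1
  have hj : j = j' := Fin.ext h2
  cases hj
  let f : ∀ s' : Fin r, Fin (ns s') → Perm (Fin (s'.1+1)) :=
    Pi.mulSingle (M := fun s' : Fin r => Fin (ns s') → Perm (Fin (s'.1+1))) s
      (Pi.mulSingle j (Equiv.swap p p'))
  refine ⟨f, ?_⟩
  show (⟨s, j, f s j p⟩ : GroundSet ns) = _
  have hf : f s j = Equiv.swap p p' := by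
    show Pi.mulSingle (M := fun s' : Fin r => Fin (ns s') → Perm (Fin (s'.1+1))) s
      (Pi.mulSingle j (Equiv.swap p p')) s j = _
    rw [Pi.mulSingle_eq_same, Pi.mulSingle_eq_same]
  rw [hf, Equiv.swap_apply_left]

theorem SB_blockDiag (f) (x : GroundSet ns) : SB x (blockDiag ns f x) := by
  obtain ⟨s, j, p⟩ := x; exact ⟨rfl, rfl⟩

theorem SB.map {g : Perm (GroundSet ns)} (hg : g ∈ Subgroup.normalizer ((blockDiag ns).range : Set (Perm (GroundSet ns))))
    {x y : GroundSet ns} (h : SB x y) : SB (g x) (g y) := by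
  obtain ⟨f, hf⟩ := exists_blockDiag_of_SB h
  have h1 : g * blockDiag ns f * g⁻¹ ∈ (blockDiag ns).range :=
    (Subgroup.mem_normalizer_iff.mp hg _).mp ⟨f, rfl⟩
  obtain ⟨f', hf'⟩ := h1
  have h2 : g y = blockDiag ns f' (g x) := by
    rw [hf', ← hf]
    simp [Equiv.Perm.mul_apply]
  rw [h2]
  exact SB_blockDiag f' (g x)

theorem fst_le {g : Perm (GroundSet ns)} (hg : g ∈ Subgroup.normalizer ((blockDiag ns).range : Set (Perm (GroundSet ns))))
    (x : GroundSet ns) : x.1.1 ≤ (g x).1.1 := by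
  obtain ⟨s, j, p⟩ := x
  set t := (g ⟨s, j, p⟩).1 with ht
  have hsb : ∀ q : Fin (s.1+1), SB (g ⟨s, j, q⟩) (g ⟨s, j, p⟩) :=
    fun q => SB.map hg ⟨rfl, rfl⟩
  have hbd : ∀ q : Fin (s.1+1), (g ⟨s, j, q⟩).2.2.val < t.1 + 1 := by
    intro q
    have h1 := (hsb q).1
    have hlt := (g ⟨s, j, q⟩).2.2.isLt
    omega
  have hFinj : Function.Injective
      (fun q : Fin (s.1+1) => (⟨(g ⟨s, j, q⟩).2.2.val, hbd q⟩ : Fin (t.1+1))) := by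
    intro q q' hqq
    have hval : (g ⟨s, j, q⟩).2.2.val = (g ⟨s, j, q'⟩).2.2.val := congrArg Fin.val hqq
    have e : g ⟨s, j, q⟩ = g ⟨s, j, q'⟩ := by
      refine ground_ext ?_ ?_ hval
      · rw [(hsb q).1, (hsb q').1]
      · rw [(hsb q).2, (hsb q').2]
    have := g.injective e
    simpa using this
  have := Fintype.card_le_of_injective _ hFinj
  simpa using this

theorem fst_eq {g : Perm (GroundSet ns)} (hg : g ∈ Subgroup.normalizer ((blockDiag ns).range : Set (Perm (GroundSet ns))))
    (x : GroundSet ns) : (g x).1 = x.1 := by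
  refine Fin.ext (le_antisymm ?_ (fst_le hg x))
  have := fst_le (Subgroup.inv_mem _ hg) (g x)
  simpa using this

/-- The induced map on block indices of size `s+1`. -/
def bidx {g : Perm (GroundSet ns)} (hg : g ∈ Subgroup.normalizer ((blockDiag ns).range : Set (Perm (GroundSet ns))))
    (s : Fin r) (j : Fin (ns s)) : Fin (ns s) :=
  ⟨(g ⟨s, j, ⟨0, Nat.succ_pos _⟩⟩).2.1.val, by
    have h1 := fst_eq hg ⟨s, j, ⟨0, Nat.succ_pos _⟩⟩
    have hlt := (g ⟨s, j, ⟨0, Nat.succ_pos _⟩⟩).2.1.isLt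
    have h2 : ns (g ⟨s, j, ⟨0, Nat.succ_pos _⟩⟩).1 = ns s := congrArg ns h1
    omega⟩

theorem bidx_left_inv {g : Perm (GroundSet ns)} (hg : g ∈ Subgroup.normalizer ((blockDiag ns).range : Set (Perm (GroundSet ns))))
    (s : Fin r) (j : Fin (ns s)) :
    bidx (Subgroup.inv_mem _ hg) s (bidx hg s j) = j := by
  set z : Fin (s.1+1) := ⟨0, Nat.succ_pos _⟩
  have hsb : SB (⟨s, bidx hg s j, z⟩ : GroundSet ns) (g ⟨s, j, z⟩) := by
    constructor
    · show s = (g ⟨s, j, z⟩).1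
      exact (fst_eq hg ⟨s, j, z⟩).symm
    · rfl
  have hsb2 := SB.map (Subgroup.inv_mem _ hg) hsb
  rw [Equiv.Perm.inv_def, Equiv.symm_apply_apply] at hsb2
  exact Fin.ext hsb2.2

/-- The induced permutation on block indices. -/
def bperm {g : Perm (GroundSet ns)} (hg : g ∈ Subgroup.normalizer ((blockDiag ns).range : Set (Perm (GroundSet ns))))
    (s : Fin r) : Perm (Fin (ns s)) where
  toFun := bidx hg s
  invFun := bidx (Subgroup.inv_mem _ hg) s
  left_inv j := bidx_left_inv hg s j
  right_inv j := by
    have := bidx_left_inv (Subgroup.inv_mem _ hg) s j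
    simpa [inv_inv] using this

theorem mem_blockDiag_range_iff {a : Perm (GroundSet ns)} :
    a ∈ (blockDiag ns).range ↔
      ∀ x : GroundSet ns, (a x).1 = x.1 ∧ (a x).2.1.val = x.2.1.val := by
  constructor
  · rintro ⟨f, rfl⟩ ⟨s, j, p⟩
    exact ⟨rfl, rfl⟩
  · intro h
    have hbd : ∀ (s : Fin r) (j : Fin (ns s)) (p : Fin (s.1+1)),
        (a ⟨s, j, p⟩).2.2.val < s.1 + 1 := by
      intro s j p
      have h1 := (h ⟨s, j, p⟩).1
      have hlt := (a ⟨s, j, p⟩).2.2.isLt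
      have h2 : (a ⟨s, j, p⟩).1.val = s.val := congrArg Fin.val h1
      omega
    have hinj : ∀ (s : Fin r) (j : Fin (ns s)), Function.Injective
        (fun p : Fin (s.1+1) => (⟨(a ⟨s, j, p⟩).2.2.val, hbd s j p⟩ : Fin (s.1+1))) := by
      intro s j p q hpq
      have hval : (a ⟨s, j, p⟩).2.2.val = (a ⟨s, j, q⟩).2.2.val := congrArg Fin.val hpq
      have e : a ⟨s, j, p⟩ = a ⟨s, j, q⟩ := by
        refine ground_ext ?_ ?_ hval
        · rw [(h ⟨s, j, p⟩).1, (h ⟨s, j, q⟩).1]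
        · rw [(h ⟨s, j, p⟩).2, (h ⟨s, j, q⟩).2]
      have := a.injective e
      simpa using this
    refine ⟨fun s j => Equiv.ofBijective _ (Finite.injective_iff_bijective.mp (hinj s j)), ?_⟩
    refine Equiv.ext fun x => ?_
    obtain ⟨s, j, p⟩ := x
    refine ground_ext ?_ ?_ ?_
    · exact (h ⟨s, j, p⟩).1.symm
    · exact (h ⟨s, j, p⟩).2.symm
    · rfl

theorem blockPerm_mem_normalizer (τ : ∀ s : Fin r, Perm (Fin (ns s))) :
    blockPerm ns τ ∈ Subgroup.normalizer ((blockDiag ns).range : Set (Perm (GroundSet ns))) := by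
  have key : ∀ (τ : ∀ s : Fin r, Perm (Fin (ns s))) (m : Perm (GroundSet ns)),
      m ∈ (blockDiag ns).range →
      blockPerm ns τ * m * (blockPerm ns τ)⁻¹ ∈ (blockDiag ns).range := by
    rintro τ m ⟨f, rfl⟩
    refine ⟨fun s j => f s ((τ s)⁻¹ j), ?_⟩
    rw [← map_inv]
    refine Equiv.ext fun x => ?_
    obtain ⟨s, j, p⟩ := x
    show (⟨s, j, f s ((τ s)⁻¹ j) p⟩ : GroundSet ns)
        = blockPerm ns τ (blockDiag ns f (blockPerm ns τ⁻¹ ⟨s, j, p⟩))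
    show (⟨s, j, f s ((τ s)⁻¹ j) p⟩ : GroundSet ns)
        = ⟨s, τ s (τ⁻¹ s j), f s (τ⁻¹ s j) p⟩
    simp [Pi.inv_apply]
  rw [Subgroup.mem_normalizer_iff]
  intro m
  constructor
  · exact key τ m
  · intro hm
    have := key τ⁻¹ _ hm
    rw [map_inv] at this
    simpa [mul_assoc] using this

theorem decomp {g : Perm (GroundSet ns)} (hg : g ∈ Subgroup.normalizer ((blockDiag ns).range : Set (Perm (GroundSet ns)))) :
    ∃ a ∈ (blockDiag ns).range, ∃ b ∈ (blockPerm ns).range, g = a * b := by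
  refine ⟨g * (blockPerm ns (bperm hg))⁻¹, ?_, blockPerm ns (bperm hg),
    ⟨bperm hg, rfl⟩, by group⟩
  rw [mem_blockDiag_range_iff]
  intro x
  obtain ⟨s, j, p⟩ := x
  have hb : (g * (blockPerm ns (bperm hg))⁻¹) ⟨s, j, p⟩
      = g ⟨s, (bperm hg s)⁻¹ j, p⟩ := by
    rw [← map_inv]
    show g (blockPerm ns (bperm hg)⁻¹ ⟨s, j, p⟩) = _
    show g ⟨s, (bperm hg)⁻¹ s j, p⟩ = _
    rw [Pi.inv_apply]
  rw [hb]
  set k := (bperm hg s)⁻¹ j with hk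
  refine ⟨fst_eq hg _, ?_⟩
  have hsb : SB (g ⟨s, k, p⟩) (g ⟨s, k, ⟨0, Nat.succ_pos _⟩⟩) := SB.map hg ⟨rfl, rfl⟩
  have h2 : (g ⟨s, k, ⟨0, Nat.succ_pos _⟩⟩).2.1.val = (bidx hg s k).val := rfl
  have h3 : bidx hg s k = bperm hg s k := rfl
  have h4 : bperm hg s k = j := by
    rw [hk]
    exact (bperm hg s).apply_symm_apply j
  show _ = j.val
  rw [hsb.2, h2, h3, h4]

theorem inf_eq_bot :
    (blockDiag ns).range ⊓ (blockPerm ns).range = (⊥ : Subgroup (Perm (GroundSet ns))) := by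
  refine (Subgroup.eq_bot_iff_forall _).mpr fun g hg => ?_
  obtain ⟨⟨f, hf⟩, ⟨τ, hτ⟩⟩ := hg
  refine Equiv.ext fun x => ?_
  obtain ⟨s, j, p⟩ := x
  have e1 : g ⟨s, j, p⟩ = ⟨s, j, f s j p⟩ := by rw [← hf]; rfl
  have e2 : g ⟨s, j, p⟩ = ⟨s, τ s j, p⟩ := by rw [← hτ]; rfl
  have e3 : (⟨s, j, f s j p⟩ : GroundSet ns) = ⟨s, τ s j, p⟩ := by rw [← e1, e2]
  have h2 : j.val = (τ s j).val := congrArg (fun x : GroundSet ns => x.2.1.val) e3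
  rw [e2]
  exact ground_ext rfl h2.symm rfl

/-- Let `n = n_1·1 + ⋯ + n_r·r` and fix a partition of a set of `n`
elements into `n_i` blocks of size `i`.  Let `N` be the subgroup of the symmetric group
stabilizing each block setwise (so `N ≅ Σ_1^{n_1} × ⋯ × Σ_r^{n_r}`) and `H ≅ Σ_{n_1} × ⋯ ×
Σ_{n_r}` the subgroup permuting blocks of equal size via order-preserving identifications.
Then the normalizer of `N` is generated by `N` and `H`, meets `H` trivially along `N`, and is
the internal semidirect product `N ⋊ H`. -/
theorem stmt_16 (n r : ℕ) (ns : Fin r → ℕ)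
    (hn : ∑ s : Fin r, ns s * (s.1 + 1) = n)
    (N H : Subgroup (Equiv.Perm (GroundSet ns)))
    (hN : N = (blockDiag ns).range) (hH : H = (blockPerm ns).range) :
    Subgroup.normalizer N = N ⊔ H ∧ N ⊓ H = ⊥ ∧
      ∀ g ∈ Subgroup.normalizer N, ∃ a ∈ N, ∃ b ∈ H, g = a * b := by
  subst hN hH
  refine ⟨le_antisymm ?_ ?_, inf_eq_bot, fun g hg => decomp hg⟩
  · intro g hg
    obtain ⟨a, ha, b, hb, rfl⟩ := decomp hg
    exact mul_mem (Subgroup.mem_sup_left ha) (Subgroup.mem_sup_right hb)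
  · refine sup_le Subgroup.le_normalizer ?_
    rintro b ⟨τ, rfl⟩
    exact blockPerm_mem_normalizer τ
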